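/- For positive semidefinite operators M, M₁, ..., M_N on a D-dimensional space with M = Σ_k M_k, and any 1 ≤ n ≤ D, Σ_k χ_n(M_k) ≤ χ_n(M) need not hold in general, but it does hold when each M_k = A_k ψ ψ† A_k† with Σ_k A_k†A_k ≤ c·I: namely Σ_k χ_n(A_k ψψ† A_k†) ≤ c · χ_n(ψψ†) for any D×D matrix ψ whose singular value decomposition is diagonal with increasing entries. -/

import Mathlib

open Matrix BigOperators ComplexOrder

open Polynomial

set_option maxHeartbeats 1000000


lemma exists_le_map {α β : Type*} [DecidableEq α] [DecidableEq β] (f : α → β) :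
    ∀ (T : Multiset β) (S : Multiset α), T ≤ S.map f → ∃ u ≤ S, u.map f = T := by
  intro T
  induction T using Multiset.induction with
  | empty => intro S _; exact ⟨0, zero_le, rfl⟩
  | cons b T ih =>
    intro S hle
    have hb : b ∈ S.map f := Multiset.mem_of_le hle (Multiset.mem_cons_self _ _)
    obtain ⟨a, ha, rfl⟩ := Multiset.mem_map.mp hb
    have hS : S.map f = f a ::ₘ (S.erase a).map f := by
      conv_lhs => rw [← Multiset.cons_erase ha]
      rw [Multiset.map_cons]
    have hT : T ≤ (S.erase a).map f := by
      have := Multiset.erase_le_erase (f a) hle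
      simpa [hS, Multiset.erase_cons_head] using this
    obtain ⟨u, hu, hmap⟩ := ih _ hT
    refine ⟨a ::ₘ u, ?_, by rw [Multiset.map_cons, hmap]⟩
    calc a ::ₘ u ≤ a ::ₘ S.erase a := Multiset.cons_le_cons _ hu
    _ = S := Multiset.cons_erase ha

lemma my_charpolyRev_mul_comm {D : ℕ} (A B : Matrix (Fin D) (Fin D) ℂ) :
    (A * B).charpolyRev = (B * A).charpolyRev := by
  unfold Matrix.charpolyRev
  have h1 : (X : ℂ[X]) • (A * B).map C = ((X : ℂ[X]) • A.map C) * B.map C := by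
    rw [Matrix.map_mul, Matrix.smul_mul]
  have h2 : (X : ℂ[X]) • (B * A).map C = B.map C * ((X : ℂ[X]) • A.map C) := by
    rw [Matrix.map_mul, Matrix.mul_smul]
  rw [h1, h2, Matrix.det_one_sub_mul_comm]

lemma my_charpoly_mul_comm {D : ℕ} (A B : Matrix (Fin D) (Fin D) ℂ) :
    (A * B).charpoly = (B * A).charpoly := by
  have hrev : (A * B).charpoly.reverse = (B * A).charpoly.reverse := by
    rw [Matrix.reverse_charpoly, Matrix.reverse_charpoly, my_charpolyRev_mul_comm]
  have hd1 : (A * B).charpoly.natDegree = D := by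
    simpa using Matrix.charpoly_natDegree_eq_dim (A * B)
  have hd2 : (B * A).charpoly.natDegree = D := by
    simpa using Matrix.charpoly_natDegree_eq_dim (B * A)
  ext k
  rcases le_or_gt k D with hk | hk
  · have e1 : (A * B).charpoly.coeff k = (A * B).charpoly.reverse.coeff (D - k) := by
      rw [Polynomial.coeff_reverse, hd1, Polynomial.revAt_le (by omega)]
      congr 1; omega
    have e2 : (B * A).charpoly.coeff k = (B * A).charpoly.reverse.coeff (D - k) := by
      rw [Polynomial.coeff_reverse, hd2, Polynomial.revAt_le (by omega)]
      congr 1; omega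
    rw [e1, e2, hrev]
  · rw [Polynomial.coeff_eq_zero_of_natDegree_lt (by omega),
      Polynomial.coeff_eq_zero_of_natDegree_lt (by omega)]

lemma my_charpoly_hermitian {D : ℕ} {M : Matrix (Fin D) (Fin D) ℂ} (hM : M.IsHermitian) :
    M.charpoly = ∏ i : Fin D, (X - C (hM.eigenvalues i : ℂ)) := by
  have hU : (star (hM.eigenvectorUnitary : Matrix (Fin D) (Fin D) ℂ)) *
      (hM.eigenvectorUnitary : Matrix (Fin D) (Fin D) ℂ) = 1 := by
    exact (Matrix.mem_unitaryGroup_iff').mp (hM.eigenvectorUnitary).2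
  have hspec := hM.spectral_theorem
  calc M.charpoly
      = (((hM.eigenvectorUnitary : Matrix (Fin D) (Fin D) ℂ) *
          diagonal (RCLike.ofReal ∘ hM.eigenvalues)) *
          (star (hM.eigenvectorUnitary : Matrix (Fin D) (Fin D) ℂ))).charpoly := by
        exact congrArg _ hspec
    _ = ((star (hM.eigenvectorUnitary : Matrix (Fin D) (Fin D) ℂ)) *
          ((hM.eigenvectorUnitary : Matrix (Fin D) (Fin D) ℂ) *
          diagonal (RCLike.ofReal ∘ hM.eigenvalues))).charpoly := my_charpoly_mul_comm _ _
    _ = (diagonal (RCLike.ofReal ∘ hM.eigenvalues) : Matrix (Fin D) (Fin D) ℂ).charpoly := by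
        rw [← Matrix.mul_assoc, hU, Matrix.one_mul]
    _ = ∏ i : Fin D, (X - C (hM.eigenvalues i : ℂ)) := by
        rw [Matrix.charpoly_of_upperTriangular _ (Matrix.blockTriangular_diagonal _)]
        simp

lemma my_multiset_eig {D : ℕ} {M : Matrix (Fin D) (Fin D) ℂ} (hM : M.IsHermitian)
    (f : Fin D → ℝ) (h : M.charpoly = ∏ i : Fin D, (X - C ((f i : ℂ)))) :
    (Finset.univ.val.map hM.eigenvalues) = Finset.univ.val.map f := by
  have key : ∀ g : Fin D → ℝ, (∏ i : Fin D, (X - C ((g i : ℂ)))).roots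
      = (Finset.univ.val.map g).map (fun x : ℝ => (x : ℂ)) := by
    intro g
    have : ∏ i : Fin D, (X - C ((g i : ℂ)))
        = (((Finset.univ.val.map g).map (fun x : ℝ => (x : ℂ))).map
            (fun z : ℂ => X - C z)).prod := by
      simp only [Finset.prod, Multiset.map_map]; rfl
    rw [this, Polynomial.roots_multiset_prod_X_sub_C]
  have h2 : ((Finset.univ.val.map hM.eigenvalues).map (fun x : ℝ => (x : ℂ)))
      = (Finset.univ.val.map f).map (fun x : ℝ => (x : ℂ)) := by
    rw [← key, ← key, ← my_charpoly_hermitian hM, ← h]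
  exact Multiset.map_injective Complex.ofReal_injective h2

/-- The set of sums of `f` over `n`-element subsets. -/
def sumSet {D : ℕ} (f : Fin D → ℝ) (n : ℕ) : Set ℝ :=
  {x : ℝ | ∃ s : Finset (Fin D), s.card = n ∧ x = ∑ i ∈ s, f i}

lemma sumSet_finite {D : ℕ} (f : Fin D → ℝ) (n : ℕ) : (sumSet f n).Finite := by
  apply Set.Finite.subset (Set.finite_range (fun s : Finset (Fin D) => ∑ i ∈ s, f i))
  rintro x ⟨s, _, rfl⟩
  exact ⟨s, rfl⟩

lemma sumSet_nonempty {D : ℕ} (f : Fin D → ℝ) {n : ℕ} (hn : n ≤ D) :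
    (sumSet f n).Nonempty := by
  obtain ⟨s, _, hcard⟩ := Finset.exists_subset_card_eq (show n ≤ (Finset.univ : Finset (Fin D)).card by simpa)
  exact ⟨∑ i ∈ s, f i, s, hcard, rfl⟩

lemma sumSet_congr {D : ℕ} {f g : Fin D → ℝ}
    (h : Finset.univ.val.map f = Finset.univ.val.map g) (n : ℕ) :
    sumSet f n = sumSet g n := by
  have key : ∀ (f g : Fin D → ℝ), Finset.univ.val.map f = Finset.univ.val.map g →
      sumSet f n ⊆ sumSet g n := by
    intro f g h x hx
    obtain ⟨s, hcard, rfl⟩ := hx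
    have hle : s.val.map f ≤ Finset.univ.val.map g := by
      rw [← h]
      exact Multiset.map_le_map (by simpa using Finset.val_le_iff.mpr (Finset.subset_univ s))
    obtain ⟨u, hu, hmap⟩ := exists_le_map g _ _ hle
    have hnodup : u.Nodup := Multiset.nodup_of_le hu (Finset.univ.nodup)
    refine ⟨⟨u, hnodup⟩, ?_, ?_⟩
    · have : Multiset.card (u.map g) = Multiset.card (s.val.map f) := by rw [hmap]
      simp only [Multiset.card_map, hcard] at this; exact this.trans hcard
    · show (s.val.map f).sum = (u.map g).sum
      rw [hmap]
  exact le_antisymm (key f g h) (key g f h.symm)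

/-- Sum of the `n` smallest eigenvalues (with multiplicity) of a Hermitian matrix. -/
noncomputable def chi {D : ℕ} (n : ℕ) (M : Matrix (Fin D) (Fin D) ℂ) : ℝ :=
  if hM : M.IsHermitian then
    sInf {x : ℝ | ∃ s : Finset (Fin D), s.card = n ∧ x = ∑ i ∈ s, hM.eigenvalues i}
  else 0

lemma chi_eq {D n : ℕ} {M : Matrix (Fin D) (Fin D) ℂ} (hM : M.IsHermitian) :
    chi n M = sInf (sumSet hM.eigenvalues n) := by
  rw [chi, dif_pos hM]; rfl

lemma chi_le {D n : ℕ} {M : Matrix (Fin D) (Fin D) ℂ} (hM : M.IsHermitian)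
    (s : Finset (Fin D)) (hs : s.card = n) :
    chi n M ≤ ∑ i ∈ s, hM.eigenvalues i := by
  rw [chi_eq hM]
  exact csInf_le (sumSet_finite _ _).bddBelow ⟨s, hs, rfl⟩

/-- Ky Fan type bound: sum of the `n` smallest eigenvalues is at most the sum of
any `n` diagonal entries. -/
lemma chi_le_diag {D n : ℕ} (hn : 1 ≤ n) {M : Matrix (Fin D) (Fin D) ℂ}
    (hM : M.IsHermitian) (s : Finset (Fin D)) (hs : s.card = n) :
    chi n M ≤ ∑ i ∈ s, (M i i).re := by
  classical
  set e := hM.eigenvalues with he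
  set U : Matrix (Fin D) (Fin D) ℂ := (hM.eigenvectorUnitary : Matrix (Fin D) (Fin D) ℂ) with hUdef
  have hUU : star U * U = 1 := (Matrix.mem_unitaryGroup_iff').mp (hM.eigenvectorUnitary).2
  have hUU' : U * star U = 1 := (Matrix.mem_unitaryGroup_iff).mp (hM.eigenvectorUnitary).2
  -- diagonal entries via spectral theorem
  have hdiag : ∀ i, (M i i).re = ∑ j, e j * Complex.normSq (U i j) := by
    intro i
    have hspec := hM.spectral_theorem
    have : M i i = ∑ j, (U i j) * ((e j : ℂ) * (starRingEnd ℂ) (U i j)) := by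
      conv_lhs => rw [hspec]
      simp only [Unitary.conjStarAlgAut_apply, Unitary.coe_star]
      rw [Matrix.mul_assoc, Matrix.mul_apply]
      congr 1; ext j
      rw [Matrix.diagonal_mul, Matrix.star_apply]
      rfl
    rw [this, Complex.re_sum]
    congr 1; ext j
    have : U i j * ((e j : ℂ) * (starRingEnd ℂ) (U i j))
        = (e j : ℂ) * ((Complex.normSq (U i j) : ℝ) : ℂ) := by
      rw [← Complex.mul_conj]; ring
    rw [this, ← Complex.ofReal_mul, Complex.ofReal_re]
  set w : Fin D → ℝ := fun j => ∑ i ∈ s, Complex.normSq (U i j) with hw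
  have hw0 : ∀ j, 0 ≤ w j := fun j => Finset.sum_nonneg fun i _ => Complex.normSq_nonneg _
  have hcol : ∀ j, ∑ i, Complex.normSq (U i j) = 1 := by
    intro j
    have h1 : (star U * U) j j = 1 := by rw [hUU]; simp
    rw [Matrix.mul_apply] at h1
    have : ∑ i, (star U) j i * U i j = ∑ i, ((Complex.normSq (U i j) : ℝ) : ℂ) := by
      congr 1; ext i
      rw [Matrix.star_apply, Complex.star_def, ← Complex.normSq_eq_conj_mul_self]
    rw [this] at h1
    have := congrArg Complex.re h1
    simpa [Complex.re_sum] using this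
  have hrow : ∀ i, ∑ j, Complex.normSq (U i j) = 1 := by
    intro i
    have h1 : (U * star U) i i = 1 := by rw [hUU']; simp
    rw [Matrix.mul_apply] at h1
    have : ∑ j, U i j * (star U) j i = ∑ j, ((Complex.normSq (U i j) : ℝ) : ℂ) := by
      congr 1; ext j
      rw [Matrix.star_apply, Complex.star_def, ← Complex.mul_conj]
    rw [this] at h1
    have := congrArg Complex.re h1
    simpa [Complex.re_sum] using this
  have hw1 : ∀ j, w j ≤ 1 := by
    intro j
    have hle : ∑ i ∈ s, Complex.normSq (U i j) ≤ ∑ i, Complex.normSq (U i j) :=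
      Finset.sum_le_sum_of_subset_of_nonneg (Finset.subset_univ s)
        (fun i _ _ => Complex.normSq_nonneg _)
    rw [hw]
    exact le_of_le_of_eq hle (hcol j)
  have hwsum : ∑ j, w j = (n : ℝ) := by
    rw [hw]
    rw [Finset.sum_comm]
    rw [Finset.sum_congr rfl (fun i _ => hrow i)]
    simp [hs]
  have hsum : ∑ i ∈ s, (M i i).re = ∑ j, e j * w j := by
    rw [Finset.sum_congr rfl (fun i _ => hdiag i), Finset.sum_comm]
    congr 1; ext j
    rw [hw, Finset.mul_sum]
  -- choose minimizing subset t
  obtain ⟨t, ht𝒮, htmin⟩ := Finset.exists_min_image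
    ((Finset.univ : Finset (Finset (Fin D))).filter (fun t => t.card = n))
    (fun t => ∑ j ∈ t, e j)
    (by
      obtain ⟨s', _, hcard⟩ := Finset.exists_subset_card_eq
        (show n ≤ (Finset.univ : Finset (Fin D)).card by rw [Finset.card_univ, Fintype.card_fin]; exact hs ▸ (by simpa using s.card_le_univ))
      exact ⟨s', by simp [hcard]⟩)
  have htcard : t.card = n := by simpa using (Finset.mem_filter.mp ht𝒮).2
  have htmin' : ∀ t' : Finset (Fin D), t'.card = n → ∑ j ∈ t, e j ≤ ∑ j ∈ t', e j := by
    intro t' h'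
    exact htmin t' (Finset.mem_filter.mpr ⟨Finset.mem_univ _, h'⟩)
  -- swap property
  have hswap : ∀ j ∈ t, ∀ j' ∉ t, e j ≤ e j' := by
    intro j hj j' hj'
    have hne : j' ∉ t.erase j := fun h => hj' (Finset.mem_of_mem_erase h)
    have hcard' : (insert j' (t.erase j)).card = n := by
      rw [Finset.card_insert_of_notMem hne, Finset.card_erase_of_mem hj, htcard]
      omega
    have := htmin' _ hcard'
    rw [Finset.sum_insert hne] at this
    have herase : ∑ x ∈ t.erase j, e x = ∑ x ∈ t, e x - e j := by
      rw [← Finset.sum_erase_add t e hj]; ring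
    rw [herase] at this
    linarith
  -- the max of e over t
  have htne : t.Nonempty := Finset.card_pos.mp (by omega)
  obtain ⟨j₀, hj₀t, hj₀max⟩ := Finset.exists_max_image t e htne
  set lam := e j₀ with hlam
  set ind : Fin D → ℝ := fun j => if j ∈ t then 1 else 0 with hind
  have hindsum : ∑ j, ind j = (n : ℝ) := by
    rw [hind]
    simp [Finset.sum_ite_mem, htcard]
  have hterm : ∀ j, 0 ≤ (e j - lam) * (w j - ind j) := by
    intro j
    by_cases hj : j ∈ t
    · have h1 : e j - lam ≤ 0 := by simp only [sub_nonpos]; exact hj₀max j hj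
      have h2 : w j - ind j ≤ 0 := by
        simp only [hind, if_pos hj, sub_nonpos]; exact hw1 j
      nlinarith
    · apply mul_nonneg
      · simp only [sub_nonneg]; exact hswap j₀ hj₀t j hj
      · simp only [hind, if_neg hj, sub_zero]; exact hw0 j
  have hsum0 : (0:ℝ) ≤ ∑ j, (e j - lam) * (w j - ind j) :=
    Finset.sum_nonneg fun j _ => hterm j
  have hexp : ∑ j, (e j - lam) * (w j - ind j)
      = ∑ j, e j * w j - ∑ j, e j * ind j - lam * (∑ j, w j) + lam * (∑ j, ind j) := by
    rw [Finset.mul_sum, Finset.mul_sum, ← Finset.sum_sub_distrib, ← Finset.sum_sub_distrib,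
      ← Finset.sum_add_distrib]
    congr 1; ext j; ring
  have hindsum2 : ∑ j, e j * ind j = ∑ j ∈ t, e j := by
    rw [hind]
    simp [mul_ite, Finset.sum_ite_mem]
  have hkey : ∑ j ∈ t, e j ≤ ∑ j, e j * w j := by
    rw [hexp, hwsum, hindsum, hindsum2] at hsum0
    linarith
  calc chi n M ≤ ∑ j ∈ t, e j := chi_le hM t htcard
    _ ≤ ∑ j, e j * w j := hkey
    _ = ∑ i ∈ s, (M i i).re := hsum.symm

/-- Special case `B_k = I` of Theorem 2: if `Σ_k A_kᴴA_k ≤ c·I` in the Loewner order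
and `ψ` is diagonal with nonnegative increasing diagonal, then
`Σ_k χₙ(A_k ψψᴴ A_kᴴ) ≤ c · χₙ(ψψᴴ)`. -/
theorem stmt9 {D N : ℕ} (A : Fin N → Matrix (Fin D) (Fin D) ℂ)
    (c : ℝ) (hc : 0 < c)
    (hA : ((c : ℂ) • (1 : Matrix (Fin D) (Fin D) ℂ) -
      ∑ k : Fin N, (A k)ᴴ * (A k)).PosSemidef)
    (d : Fin D → ℝ) (hd0 : ∀ i, 0 ≤ d i) (hdmono : Monotone d)
    (ψ : Matrix (Fin D) (Fin D) ℂ)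
    (hψ : ψ = Matrix.diagonal (fun i : Fin D => (d i : ℂ)))
    (n : ℕ) (hn1 : 1 ≤ n) (hnD : n ≤ D) :
    ∑ k : Fin N, chi n ((A k) * (ψ * ψᴴ) * (A k)ᴴ) ≤ c * chi n (ψ * ψᴴ) := by
  classical
  -- ψψᴴ is the diagonal matrix of squares
  have hψH : ψᴴ = ψ := by
    rw [hψ, Matrix.diagonal_conjTranspose]
    congr 1
    ext i
    simp [Pi.star_def]
  have hsq : ψ * ψᴴ = Matrix.diagonal (fun i : Fin D => ((d i ^ 2 : ℝ) : ℂ)) := by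
    rw [hψH, hψ, Matrix.diagonal_mul_diagonal]
    congr 1; ext i; push_cast; ring
  have hHerm2 : (ψ * ψᴴ).IsHermitian := Matrix.isHermitian_mul_conjTranspose_self ψ
  -- charpoly of ψψᴴ
  have hcp2 : (ψ * ψᴴ).charpoly = ∏ i : Fin D, (X - C ((d i ^ 2 : ℝ) : ℂ)) := by
    rw [hsq, Matrix.charpoly_of_upperTriangular _ (Matrix.blockTriangular_diagonal _)]
    simp
  have hset2 : sumSet hHerm2.eigenvalues n = sumSet (fun i => d i ^ 2) n :=
    sumSet_congr (my_multiset_eig hHerm2 _ hcp2) n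
  -- chi of the RHS is attained at some subset s₀
  have hchi2 : chi n (ψ * ψᴴ) = sInf (sumSet (fun i => d i ^ 2) n) := by
    rw [chi_eq hHerm2, hset2]
  have hmem : sInf (sumSet (fun i => d i ^ 2) n) ∈ sumSet (fun i => d i ^ 2) n :=
    (sumSet_nonempty _ hnD).csInf_mem (sumSet_finite _ _)
  obtain ⟨s₀, hs₀card, hs₀⟩ := hmem
  -- the key per-k bound
  have hk : ∀ k : Fin N, chi n ((A k) * (ψ * ψᴴ) * (A k)ᴴ)
      ≤ ∑ i ∈ s₀, (((A k * ψ)ᴴ * (A k * ψ)) i i).re := by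
    intro k
    set Xk := A k * ψ with hX
    have hfact : (A k) * (ψ * ψᴴ) * (A k)ᴴ = Xk * Xkᴴ := by
      rw [hX, Matrix.conjTranspose_mul]
      noncomm_ring
    have hMk : ((A k) * (ψ * ψᴴ) * (A k)ᴴ).IsHermitian := by
      rw [hfact]; exact Matrix.isHermitian_mul_conjTranspose_self Xk
    have hNk : (Xkᴴ * Xk).IsHermitian := Matrix.isHermitian_conjTranspose_mul_self Xk
    have hcpk : ((A k) * (ψ * ψᴴ) * (A k)ᴴ).charpoly
        = ∏ i : Fin D, (X - C (hNk.eigenvalues i : ℂ)) := by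
      rw [hfact, my_charpoly_mul_comm, my_charpoly_hermitian hNk]
    have hsetk : sumSet hMk.eigenvalues n = sumSet hNk.eigenvalues n :=
      sumSet_congr (my_multiset_eig hMk _ hcpk) n
    have : chi n ((A k) * (ψ * ψᴴ) * (A k)ᴴ) = chi n (Xkᴴ * Xk) := by
      rw [chi_eq hMk, chi_eq hNk, hsetk]
    rw [this]
    exact chi_le_diag hn1 hNk s₀ hs₀card
  -- sum the bounds and use PSD hypothesis
  have hsum : ∑ k : Fin N, chi n ((A k) * (ψ * ψᴴ) * (A k)ᴴ)
      ≤ ∑ i ∈ s₀, ∑ k : Fin N, (((A k * ψ)ᴴ * (A k * ψ)) i i).re := by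
    rw [Finset.sum_comm]
    exact Finset.sum_le_sum fun k _ => hk k
  have hentry : ∀ i, ∑ k : Fin N, (((A k * ψ)ᴴ * (A k * ψ)) i i).re ≤ c * d i ^ 2 := by
    intro i
    set Q : Matrix (Fin D) (Fin D) ℂ := ∑ k : Fin N, (A k)ᴴ * (A k) with hQ
    have hPSD : (ψᴴ * ((c : ℂ) • (1 : Matrix (Fin D) (Fin D) ℂ) - Q) * ψ).PosSemidef :=
      hA.conjTranspose_mul_mul_same ψ
    have hre : 0 ≤ ((ψᴴ * ((c : ℂ) • 1 - Q) * ψ) i i).re := by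
      have h0 := hPSD.re_dotProduct_nonneg (Pi.single i 1)
      simpa [Matrix.mulVec_single, dotProduct, Pi.single_apply,
        Finset.sum_ite_eq', Complex.re_sum] using h0
    have hsplit : ψᴴ * ((c : ℂ) • 1 - Q) * ψ
        = (c : ℂ) • (ψᴴ * ψ) - ψᴴ * Q * ψ := by
      rw [Matrix.mul_sub, Matrix.sub_mul, Matrix.mul_smul, Matrix.mul_one, Matrix.smul_mul]
    have hQψ : ψᴴ * Q * ψ = ∑ k : Fin N, (A k * ψ)ᴴ * (A k * ψ) := by
      rw [hQ, Matrix.mul_sum, Matrix.sum_mul]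
      congr 1; ext k
      rw [Matrix.conjTranspose_mul]
      noncomm_ring
    have hψψ : (ψᴴ * ψ) i i = ((d i ^ 2 : ℝ) : ℂ) := by
      have : ψᴴ * ψ = Matrix.diagonal (fun i : Fin D => ((d i ^ 2 : ℝ) : ℂ)) := by
        rw [hψH]
        conv_lhs => rw [← hψH]
        rw [← hsq, hψH]
      rw [this, Matrix.diagonal_apply_eq]
    rw [hsplit] at hre
    have : ((ψᴴ * Q * ψ) i i).re = ∑ k : Fin N, (((A k * ψ)ᴴ * (A k * ψ)) i i).re := by
      rw [hQψ, Matrix.sum_apply, Complex.re_sum]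
    rw [Matrix.sub_apply, Complex.sub_re, Matrix.smul_apply, hψψ] at hre
    rw [← this]
    have : ((c : ℂ) • ((d i ^ 2 : ℝ) : ℂ)).re = c * d i ^ 2 := by
      simp [smul_eq_mul, ← Complex.ofReal_pow, ← Complex.ofReal_mul]
    linarith [hre, this]
  calc ∑ k : Fin N, chi n ((A k) * (ψ * ψᴴ) * (A k)ᴴ)
      ≤ ∑ i ∈ s₀, ∑ k : Fin N, (((A k * ψ)ᴴ * (A k * ψ)) i i).re := hsum
    _ ≤ ∑ i ∈ s₀, c * d i ^ 2 := Finset.sum_le_sum fun i _ => hentry i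
    _ = c * ∑ i ∈ s₀, d i ^ 2 := by rw [Finset.mul_sum]
    _ = c * chi n (ψ * ψᴴ) := by rw [hchi2, ← hs₀]
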